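/- Fix A, k, σ, γ, η, c > 0, an integer N ≥ 1, an integer q̄ ≥ 1 and T > 0. Set C₀ := A·(ση/k)·(1+σγ/k)^{−k/(σγ)}·(1 − σ²γη/((k+σγ)(k+ση)))^{1+k/(ση)}, Ĉ_N := C₀·e^{(N−1)k/(ση)}·( σγ + (ση+k)/N )/( σγ + ση + k ), C_N := kγησ/(2(Nγ+η)) and C'_N := Ĉ_N·kN/(ση). Let v : [0,T] × {−q̄,…,q̄} → ℝ take strictly negative values, be differentiable in t for each q, and define u(t,q) := (−v(t,q))^{−kN/(ση)}. Then v satisfies ∂ₜv(t,q) + (γη²σ²/(2N(Nγ+η)))·q²·v(t,q) − Ĉ_N·v(t,q)·[ 1_{q>−q̄}·(v(t,q)/v(t,q−1))^{Nk/(ση)} + 1_{q<q̄}·(v(t,q)/v(t,q+1))^{Nk/(ση)} ] = 0 for all t ∈ [0,T) and |q| ≤ q̄, with v(T,q) = −1, if and only if u satisfies the linear system ∂ₜu(t,q) = C_N·q²·u(t,q) − C'_N·( u(t,q+1)·1_{q<q̄} + u(t,q−1)·1_{q>−q̄} ) for all t ∈ [0,T) and |q| ≤ q̄, with u(T,q)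 = 1. -/

import Mathlib

private lemma statement15_aux (cm cp : Prop) [Decidable cm] [Decidable cp]
    (α Bc C qr d w wm wp : ℝ) (hα : 0 < α)
    (hw : 0 < -w) (hwm : 0 < -wm) (hwp : 0 < -wp) :
    d + Bc * qr ^ 2 * w
        - C * w * ((if cm then (w / wm) ^ α else 0) + (if cp then (w / wp) ^ α else 0)) = 0
    ↔ α * ((-w) ^ α)⁻¹ * (-w)⁻¹ * d
        = α * Bc * qr ^ 2 * ((-w) ^ α)⁻¹
          - C * α * ((if cp then ((-wp) ^ α)⁻¹ else 0) + (if cm then ((-wm) ^ α)⁻¹ else 0)) := by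
  have hap : 0 < (-w) ^ α := Real.rpow_pos_of_pos hw α
  have hapm : 0 < (-wm) ^ α := Real.rpow_pos_of_pos hwm α
  have happ : 0 < (-wp) ^ α := Real.rpow_pos_of_pos hwp α
  have em : (w / wm) ^ α = (-w) ^ α * ((-wm) ^ α)⁻¹ := by
    rw [show w / wm = (-w) / (-wm) from (neg_div_neg_eq _ _).symm,
      Real.div_rpow hw.le hwm.le, div_eq_mul_inv]
  have ep : (w / wp) ^ α = (-w) ^ α * ((-wp) ^ α)⁻¹ := by
    rw [show w / wp = (-w) / (-wp) from (neg_div_neg_eq _ _).symm,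
      Real.div_rpow hw.le hwp.le, div_eq_mul_inv]
  have im : (if cm then (w / wm) ^ α else 0)
      = (if cm then (1 : ℝ) else 0) * ((-w) ^ α * ((-wm) ^ α)⁻¹) := by
    split <;> simp [em]
  have ip : (if cp then (w / wp) ^ α else 0)
      = (if cp then (1 : ℝ) else 0) * ((-w) ^ α * ((-wp) ^ α)⁻¹) := by
    split <;> simp [ep]
  have jm : (if cm then ((-wm) ^ α)⁻¹ else 0)
      = (if cm then (1 : ℝ) else 0) * ((-wm) ^ α)⁻¹ := by
    split <;> simp
  have jp : (if cp then ((-wp) ^ α)⁻¹ else 0)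
      = (if cp then (1 : ℝ) else 0) * ((-wp) ^ α)⁻¹ := by
    split <;> simp
  rw [im, ip, jm, jp]
  set sm : ℝ := if cm then (1 : ℝ) else 0 with hsm
  set sp : ℝ := if cp then (1 : ℝ) else 0 with hsp
  set a : ℝ := (-w) ^ α with ha
  set am : ℝ := (-wm) ^ α with ham
  set ap : ℝ := (-wp) ^ α with hap2
  have hwne : w ≠ 0 := by intro h; rw [h] at hw; simp at hw
  have key : α * a⁻¹ * (-w)⁻¹ * d
        - (α * Bc * qr ^ 2 * a⁻¹ - C * α * (sp * ap⁻¹ + sm * am⁻¹))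
      = (α * a⁻¹ * (-w)⁻¹)
        * (d + Bc * qr ^ 2 * w - C * w * (sm * (a * am⁻¹) + sp * (a * ap⁻¹))) := by
    field_simp
    ring
  have hm : (α * a⁻¹ * (-w)⁻¹) ≠ 0 :=
    ne_of_gt (mul_pos (mul_pos hα (inv_pos.mpr hap)) (inv_pos.mpr hw))
  constructor
  · intro h
    have h2 := key
    rw [h, mul_zero, sub_eq_zero] at h2
    exact h2
  · intro h
    have h2 := key
    rw [h, sub_self] at h2
    exact (mul_eq_zero.mp h2.symm).resolve_left hm

/-- linearization of the symmetric `N`-exchange Nash equilibrium HJB system: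
`v` (strictly negative, differentiable in time) solves the nonlinear system (edp_v^i) iff
`u = (−v)^{−kN/(ση)}` solves the linear system (linearPDE:Nex) with `u(T,·) = 1`. -/
theorem statement15 (A k σ γ η c T : ℝ) (N : ℕ) (qbar : ℤ)
    (hA : 0 < A) (hk : 0 < k) (hσ : 0 < σ) (hγ : 0 < γ) (hη : 0 < η) (hc : 0 < c)
    (hN : 1 ≤ N) (hqbar : 1 ≤ qbar) (hT : 0 < T)
    (v : ℝ → ℤ → ℝ)
    (hvneg : ∀ t : ℝ, ∀ q : ℤ, v t q < 0)
    (hvdiff : ∀ q : ℤ, ∀ t : ℝ, DifferentiableAt ℝ (fun s => v s q) t) :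
    letI C₀ : ℝ := A * (σ * η / k) * (1 + σ * γ / k) ^ (-(k / (σ * γ))) *
      (1 - σ ^ 2 * γ * η / ((k + σ * γ) * (k + σ * η))) ^ (1 + k / (σ * η))
    letI ChatN : ℝ := C₀ * Real.exp (((N : ℝ) - 1) * k / (σ * η)) *
      ((σ * γ + (σ * η + k) / (N : ℝ)) / (σ * γ + σ * η + k))
    letI CN : ℝ := k * γ * η * σ / (2 * ((N : ℝ) * γ + η))
    letI CN' : ℝ := ChatN * k * (N : ℝ) / (σ * η)
    letI u : ℝ → ℤ → ℝ := fun t q => (-(v t q)) ^ (-(k * (N : ℝ) / (σ * η)))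
    ((∀ t ∈ Set.Ico (0 : ℝ) T, ∀ q : ℤ, |q| ≤ qbar →
        deriv (fun s => v s q) t
          + (γ * η ^ 2 * σ ^ 2 / (2 * (N : ℝ) * ((N : ℝ) * γ + η))) * (q : ℝ) ^ 2 * v t q
          - ChatN * v t q *
            ((if -qbar < q then (v t q / v t (q - 1)) ^ ((N : ℝ) * k / (σ * η)) else 0)
              + (if q < qbar then (v t q / v t (q + 1)) ^ ((N : ℝ) * k / (σ * η)) else 0)) = 0)
      ∧ (∀ q : ℤ, |q| ≤ qbar → v T q = -1))
    ↔
    ((∀ t ∈ Set.Ico (0 : ℝ) T, ∀ q : ℤ, |q| ≤ qbar →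
        deriv (fun s => u s q) t
          = CN * (q : ℝ) ^ 2 * u t q
            - CN' * ((if q < qbar then u t (q + 1) else 0)
              + (if -qbar < q then u t (q - 1) else 0)))
      ∧ (∀ q : ℤ, |q| ≤ qbar → u T q = 1)) := by
  beta_reduce
  have hNpos : (0 : ℝ) < (N : ℝ) := by
    have : 0 < N := hN
    exact_mod_cast this
  set α : ℝ := k * (N : ℝ) / (σ * η) with hα_def
  set Ch : ℝ := A * (σ * η / k) * (1 + σ * γ / k) ^ (-(k / (σ * γ))) *
      (1 - σ ^ 2 * γ * η / ((k + σ * γ) * (k + σ * η))) ^ (1 + k / (σ * η)) *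
      Real.exp (((N : ℝ) - 1) * k / (σ * η)) *
      ((σ * γ + (σ * η + k) / (N : ℝ)) / (σ * γ + σ * η + k)) with hCh_def
  have hαpos : 0 < α := by
    rw [hα_def]
    exact div_pos (mul_pos hk hNpos) (mul_pos hσ hη)
  have hpos : ∀ (t : ℝ) (q : ℤ), 0 < -(v t q) := fun t q => neg_pos.mpr (hvneg t q)
  have hrpow : ∀ (t : ℝ) (q : ℤ), (-(v t q)) ^ (-α) = ((-(v t q)) ^ α)⁻¹ :=
    fun t q => Real.rpow_neg (hpos t q).le α
  have hCN : k * γ * η * σ / (2 * ((N : ℝ) * γ + η))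
      = α * (γ * η ^ 2 * σ ^ 2 / (2 * (N : ℝ) * ((N : ℝ) * γ + η))) := by
    rw [hα_def]
    have h2 : (2 * ((N : ℝ) * γ + η)) ≠ 0 := by positivity
    have h3 : (2 * (N : ℝ) * ((N : ℝ) * γ + η)) ≠ 0 := by positivity
    field_simp
  have hCN' : Ch * k * (N : ℝ) / (σ * η) = Ch * α := by
    rw [hα_def]; ring
  have hderiv : ∀ (t : ℝ) (q : ℤ), deriv (fun s => (-(v s q)) ^ (-α)) t
      = α * ((-(v t q)) ^ α)⁻¹ * (-(v t q))⁻¹ * deriv (fun s => v s q) t := by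
    intro t q
    have hv := (hvdiff q t).hasDerivAt
    have h := (show HasDerivAt (fun s => -(v s q)) (-deriv (fun s => v s q) t) t from hv.neg).rpow_const (p := -α) (Or.inl (hpos t q).ne')
    rw [h.deriv]
    have hpow : (-(v t q)) ^ (-α - 1) = ((-(v t q)) ^ α)⁻¹ * (-(v t q))⁻¹ := by
      rw [show (-α - 1 : ℝ) = -(α + 1) by ring, Real.rpow_neg (hpos t q).le,
        Real.rpow_add_one (hpos t q).ne', mul_inv]
    rw [hpow]
    ring
  have hterm : ∀ q : ℤ, (v T q = -1 ↔ (-(v T q)) ^ (-α) = 1) := by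
    intro q
    constructor
    · intro h
      rw [h]
      norm_num [Real.one_rpow]
    · intro h
      have hl := congrArg Real.log h
      rw [Real.log_rpow (hpos T q), Real.log_one] at hl
      have hlog : Real.log (-(v T q)) = 0 := by
        rcases mul_eq_zero.mp hl with h' | h'
        · exact absurd (neg_eq_zero.mp h') hαpos.ne'
        · exact h'
      have h2 : -(v T q) = 1 := by
        rcases Real.log_eq_zero.mp hlog with h' | h' | h'
        · exact absurd h' (hpos T q).ne'
        · exact h'
        · linarith [hpos T q]
      linarith
  have main : ∀ (t : ℝ) (q : ℤ),
      (deriv (fun s => v s q) t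
          + (γ * η ^ 2 * σ ^ 2 / (2 * (N : ℝ) * ((N : ℝ) * γ + η))) * (q : ℝ) ^ 2 * v t q
          - Ch * v t q *
            ((if -qbar < q then (v t q / v t (q - 1)) ^ ((N : ℝ) * k / (σ * η)) else 0)
              + (if q < qbar then (v t q / v t (q + 1)) ^ ((N : ℝ) * k / (σ * η)) else 0)) = 0)
      ↔ (deriv (fun s => (-(v s q)) ^ (-α)) t
          = k * γ * η * σ / (2 * ((N : ℝ) * γ + η)) * (q : ℝ) ^ 2 * (-(v t q)) ^ (-α)
            - Ch * k * (N : ℝ) / (σ * η) *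
              ((if q < qbar then (-(v t (q + 1))) ^ (-α) else 0)
                + (if -qbar < q then (-(v t (q - 1))) ^ (-α) else 0))) := by
    intro t q
    have hexp : (N : ℝ) * k / (σ * η) = α := by rw [hα_def]; ring
    rw [hexp, hCN, hCN', hderiv t q, hrpow t q, hrpow t (q + 1), hrpow t (q - 1)]
    exact statement15_aux (-qbar < q) (q < qbar) α
      (γ * η ^ 2 * σ ^ 2 / (2 * (N : ℝ) * ((N : ℝ) * γ + η))) Ch ((q : ℝ))
      (deriv (fun s => v s q) t) (v t q) (v t (q - 1)) (v t (q + 1))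
      hαpos (hpos t q) (hpos t (q - 1)) (hpos t (q + 1))
  constructor
  · rintro ⟨h1, h2⟩
    exact ⟨fun t ht q hq => (main t q).mp (h1 t ht q hq),
      fun q hq => (hterm q).mp (h2 q hq)⟩
  · rintro ⟨h1, h2⟩
    exact ⟨fun t ht q hq => (main t q).mpr (h1 t ht q hq),
      fun q hq => (hterm q).mpr (h2 q hq)⟩
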